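/- EnKF matrix identity (v): with the notation of the context, the proposal-covariance difference satisfies Δ_Σ := Σ_t − Σ = Δ_K·S·Δ_K^⊤, where Δ_K := K_t − K. Consequently Δ_Σ is symmetric positive semidefinite, Σ_t is symmetric positive definite, and the ranges (column spaces) of Δ_Σ and Δ_K coincide. -/

import Mathlib

open Matrix

/-- Expansion of the EnKF posterior covariance for an arbitrary gain. -/
private lemma enkf_sig_expand {d m : ℕ}
    (H : Matrix (Fin m) (Fin d) ℝ) (Q : Matrix (Fin d) (Fin d) ℝ)
    (R : Matrix (Fin m) (Fin m) ℝ) (G : Matrix (Fin d) (Fin m) ℝ)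
    (hQsym : Qᵀ = Q) :
    (1 - G * H) * Q * (1 - G * H)ᵀ + G * R * Gᵀ
      = Q - G * (H * Q) - (H * Q)ᵀ * Gᵀ + G * (H * Q * Hᵀ + R) * Gᵀ := by
  simp only [transpose_sub, transpose_one, transpose_mul, hQsym, Matrix.sub_mul,
    Matrix.mul_sub, Matrix.add_mul, Matrix.mul_add, Matrix.mul_assoc, Matrix.one_mul,
    Matrix.mul_one]
  abel

/-- EnKF matrix identity (v): with the EnKF matrices as in
the context, `Σ_t − Σ = Δ_K·S·Δ_Kᵀ` where `Δ_K = K_t − K`; consequently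
`Σ_t − Σ` is symmetric positive semidefinite, `Σ_t` is symmetric positive
definite, and the ranges (column spaces) of `Σ_t − Σ` and `Δ_K` coincide. -/
theorem enkf_matrix_identity_v
    {d m : ℕ} (hd : 1 ≤ d) (hm : 1 ≤ m)
    (H : Matrix (Fin m) (Fin d) ℝ)
    (Q Qt : Matrix (Fin d) (Fin d) ℝ) (R : Matrix (Fin m) (Fin m) ℝ)
    (hQ : Q.PosDef) (hQt : Qt.PosDef) (hR : R.PosDef)
    (S St : Matrix (Fin m) (Fin m) ℝ)
    (hS : S = H * Q * Hᵀ + R) (hSt : St = H * Qt * Hᵀ + R)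
    (K Kt : Matrix (Fin d) (Fin m) ℝ)
    (hK : K = Q * Hᵀ * S⁻¹) (hKt : Kt = Qt * Hᵀ * St⁻¹)
    (Sig Sigt : Matrix (Fin d) (Fin d) ℝ)
    (hSig : Sig = (1 - K * H) * Q * (1 - K * H)ᵀ + K * R * Kᵀ)
    -- note: Σ_t is built from Q, with only the gain replaced by K_t
    (hSigt : Sigt = (1 - Kt * H) * Q * (1 - Kt * H)ᵀ + Kt * R * Ktᵀ) :
    Sigt - Sig = (Kt - K) * S * (Kt - K)ᵀ ∧
    (Sigt - Sig).PosSemidef ∧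
    Sigt.PosDef ∧
    LinearMap.range (Sigt - Sig).mulVecLin = LinearMap.range (Kt - K).mulVecLin := by
  have hQsym : Qᵀ = Q := by
    have := hQ.isHermitian
    rwa [IsHermitian, conjTranspose_eq_transpose_of_trivial] at this
  -- S is positive definite
  have hSpd : S.PosDef := by
    rw [hS]
    refine Matrix.PosDef.posSemidef_add ?_ hR
    have := hQ.posSemidef.mul_mul_conjTranspose_same H
    rwa [conjTranspose_eq_transpose_of_trivial] at this
  have hSsym : Sᵀ = S := by
    have := hSpd.isHermitian
    rwa [IsHermitian, conjTranspose_eq_transpose_of_trivial] at this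
  -- K * S = Q * Hᵀ
  have hKS : K * S = Q * Hᵀ := by
    rw [hK, Matrix.mul_assoc (Q * Hᵀ) S⁻¹ S,
      nonsing_inv_mul S (isUnit_iff_isUnit_det S |>.1 hSpd.isUnit), Matrix.mul_one]
  have hHQ : H * Q = S * Kᵀ := by
    have := congrArg Matrix.transpose hKS
    rw [transpose_mul, transpose_mul, transpose_transpose, hQsym, hSsym] at this
    exact this.symm
  have hQH : Q * Hᵀ = K * S := hKS.symm
  -- the two covariance expansions
  have hSig' : Sig = Q - K * S * Kᵀ := by
    rw [hSig, enkf_sig_expand H Q R K hQsym, ← hS, hHQ]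
    have h2 : (S * Kᵀ)ᵀ = K * S := by
      rw [transpose_mul, transpose_transpose, hSsym]
    rw [h2]
    simp only [Matrix.mul_assoc]
    abel
  have hSigt' : Sigt = Q - Kt * (S * Kᵀ) - K * S * Ktᵀ + Kt * S * Ktᵀ := by
    rw [hSigt, enkf_sig_expand H Q R Kt hQsym, ← hS, hHQ]
    have h2 : (S * Kᵀ)ᵀ = K * S := by
      rw [transpose_mul, transpose_transpose, hSsym]
    rw [h2]
  -- the main identity
  have hmain : Sigt - Sig = (Kt - K) * S * (Kt - K)ᵀ := by
    rw [hSig', hSigt']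
    simp only [transpose_sub, Matrix.sub_mul, Matrix.mul_sub, Matrix.mul_assoc]
    abel
  refine ⟨hmain, ?_, ?_, ?_⟩
  · -- positive semidefinite
    rw [hmain]
    have := hSpd.posSemidef.mul_mul_conjTranspose_same (Kt - K)
    rwa [conjTranspose_eq_transpose_of_trivial] at this
  · -- Sigt is positive definite
    rw [hSigt]
    have hq := hQ.posSemidef.mul_mul_conjTranspose_same (1 - Kt * H)
    have hr := hR.posSemidef.mul_mul_conjTranspose_same Kt
    rw [conjTranspose_eq_transpose_of_trivial] at hq hr
    refine PosDef.of_dotProduct_mulVec_pos (hq.isHermitian.add hr.isHermitian) (fun x hx => ?_)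
    rw [add_mulVec, dotProduct_add]
    by_cases h1 : (1 - Kt * H)ᵀ *ᵥ x = 0
    · -- then Ktᵀ *ᵥ x ≠ 0, so the second term is positive
      have hKtx : Ktᵀ *ᵥ x ≠ 0 := by
        intro h2
        apply hx
        have : (1 - Kt * H)ᵀ *ᵥ x = x - Hᵀ *ᵥ (Ktᵀ *ᵥ x) := by
          rw [transpose_sub, transpose_one, transpose_mul, sub_mulVec, one_mulVec,
            mulVec_mulVec]
        rw [this, h2, mulVec_zero, sub_zero] at h1
        exact h1
      have hpos : 0 < star x ⬝ᵥ (Kt * R * Ktᵀ) *ᵥ x := by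
        have : star x ⬝ᵥ (Kt * R * Ktᵀ) *ᵥ x
            = star (Ktᵀ *ᵥ x) ⬝ᵥ R *ᵥ (Ktᵀ *ᵥ x) := by
          show x ⬝ᵥ (Kt * R * Ktᵀ) *ᵥ x = (Ktᵀ *ᵥ x) ⬝ᵥ R *ᵥ (Ktᵀ *ᵥ x)
          simp only [← mulVec_mulVec, dotProduct_mulVec, mulVec_transpose]
        rw [this]
        exact hR.dotProduct_mulVec_pos hKtx
      calc (0:ℝ) < 0 + star x ⬝ᵥ (Kt * R * Ktᵀ) *ᵥ x := by simpa using hpos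
        _ ≤ _ := by gcongr; exact hq.dotProduct_mulVec_nonneg x
    · have hpos : 0 < star x ⬝ᵥ ((1 - Kt * H) * Q * (1 - Kt * H)ᵀ) *ᵥ x := by
        have : star x ⬝ᵥ ((1 - Kt * H) * Q * (1 - Kt * H)ᵀ) *ᵥ x
            = star ((1 - Kt * H)ᵀ *ᵥ x) ⬝ᵥ Q *ᵥ ((1 - Kt * H)ᵀ *ᵥ x) := by
          show x ⬝ᵥ ((1 - Kt * H) * Q * (1 - Kt * H)ᵀ) *ᵥ x
            = ((1 - Kt * H)ᵀ *ᵥ x) ⬝ᵥ Q *ᵥ ((1 - Kt * H)ᵀ *ᵥ x)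
          simp only [← mulVec_mulVec, dotProduct_mulVec, mulVec_transpose]
        rw [this]
        exact hQ.dotProduct_mulVec_pos h1
      calc (0:ℝ) < star x ⬝ᵥ ((1 - Kt * H) * Q * (1 - Kt * H)ᵀ) *ᵥ x + 0 := by simpa using hpos
        _ ≤ _ := by gcongr; exact hr.dotProduct_mulVec_nonneg x
  · -- equality of ranges
    rw [hmain]
    set Δ := Kt - K with hΔ
    -- the easy inclusion
    have hle : LinearMap.range (Δ * S * Δᵀ).mulVecLin ≤ LinearMap.range Δ.mulVecLin := by
      rw [show Δ * S * Δᵀ = Δ * (S * Δᵀ) from Matrix.mul_assoc Δ S Δᵀ, mulVecLin_mul]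
      exact LinearMap.range_comp_le_range _ _
    -- equality of ranks via the square root of S
    have hBpsd := hSpd.posSemidef
    open scoped MatrixOrder in set B := CFC.sqrt S with hB
    open scoped MatrixOrder in have hBB : B * B = S := CFC.sqrt_mul_sqrt_self S hBpsd.nonneg
    open scoped MatrixOrder in have hBherm : Bᴴ = B := (CFC.sqrt_nonneg S).posSemidef.isHermitian
    have hBdet : IsUnit B.det := by
      have hdetS : (0:ℝ) < S.det := hSpd.det_pos
      rw [← hBB, det_mul] at hdetS
      have : B.det ≠ 0 := by
        intro h; rw [h, mul_zero] at hdetS; exact lt_irrefl 0 hdetS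
      exact this.isUnit
    have hfactor : Δ * S * Δᵀ = (Δ * B) * (Δ * B)ᴴ := by
      rw [conjTranspose_mul, hBherm, ← hBB, conjTranspose_eq_transpose_of_trivial]
      simp only [Matrix.mul_assoc]
    have hrank : (Δ * S * Δᵀ).rank = Δ.rank := by
      rw [hfactor, rank_self_mul_conjTranspose, rank_mul_eq_left_of_isUnit_det B Δ hBdet]
    exact (Submodule.eq_of_le_of_finrank_le hle (le_of_eq hrank.symm))
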